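/- For a bivariate polynomial p(x,y), there exist univariate polynomials p̃_{(k,ℓ)} and N ≤ deg p such that p(r cos φ, r sin φ) = Σ_{k=0}^{N} Σ_{ℓ=1}^{a_k} p̃_{(k,ℓ)}(r²) r^k Y_{(k,ℓ)}(φ) (the Almansi/Gauss decomposition). Consequently, every Fourier coefficient of a polynomial p has the form p_{(k,ℓ)}(r) = p̃_{(k,ℓ)}(r²) r^k. -/

import Mathlib

open Real MeasureTheory

/-- The orthonormalized circular harmonics. -/
noncomputable def Y : ℕ → ℕ → ℝ → ℝ
  | 0, _, _ => 1 / Real.sqrt (2 * π)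
  | k, 1, φ => Real.cos (k * φ) / Real.sqrt π
  | k, _, φ => Real.sin (k * φ) / Real.sqrt π

/-- `a_k`: the number of circular harmonics of degree `k`. -/
def aa (k : ℕ) : ℕ := if k = 0 then 1 else 2

open intervalIntegral

lemma int_cos_z (m : ℤ) : ∫ φ in (0:ℝ)..(2*π), Real.cos (m * φ) = if m = 0 then 2*π else 0 := by
  rcases eq_or_ne m 0 with h | h
  · simp [h]
  · have hm : (m:ℝ) ≠ 0 := Int.cast_ne_zero.mpr h
    rw [if_neg h, intervalIntegral.integral_comp_mul_left (fun x => Real.cos x) hm]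
    have : (m:ℝ) * (2*π) = (2*m) * π := by push_cast; ring
    rw [integral_cos, this]
    have h2 : ((2*m : ℤ) : ℝ) = 2 * (m:ℝ) := by push_cast; ring
    rw [← h2, Real.sin_int_mul_pi]
    simp

lemma int_sin_z (m : ℤ) : ∫ φ in (0:ℝ)..(2*π), Real.sin (m * φ) = 0 := by
  rcases eq_or_ne m 0 with h | h
  · simp [h]
  · have hm : (m:ℝ) ≠ 0 := Int.cast_ne_zero.mpr h
    rw [intervalIntegral.integral_comp_mul_left (fun x => Real.sin x) hm]
    simp [integral_sin]

lemma cont_cosm (m : ℝ) : Continuous (fun φ : ℝ => Real.cos (m * φ)) :=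
  Real.continuous_cos.comp (continuous_const.mul continuous_id)

lemma cont_sinm (m : ℝ) : Continuous (fun φ : ℝ => Real.sin (m * φ)) :=
  Real.continuous_sin.comp (continuous_const.mul continuous_id)

lemma int_cos_cos (m n : ℕ) : ∫ φ in (0:ℝ)..(2*π), Real.cos (m * φ) * Real.cos (n * φ)
    = if m = n then (if m = 0 then 2*π else π) else 0 := by
  have h : ∀ φ : ℝ, Real.cos (m * φ) * Real.cos (n * φ)
      = (Real.cos (((m+n : ℤ) : ℝ) * φ) + Real.cos (((m - n : ℤ) : ℝ) * φ)) / 2 := by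
    intro φ
    push_cast
    rw [show ((m:ℝ)+n)*φ = m*φ + n*φ by ring, show ((m:ℝ)-n)*φ = m*φ - n*φ by ring,
      Real.cos_add, Real.cos_sub]
    ring
  rw [intervalIntegral.integral_congr (g := fun φ =>
      (Real.cos (((m+n : ℤ) : ℝ) * φ) + Real.cos (((m - n : ℤ) : ℝ) * φ)) / 2)
      (fun φ _ => h φ)]
  rw [intervalIntegral.integral_div, intervalIntegral.integral_add
    ((cont_cosm _).intervalIntegrable _ _) ((cont_cosm _).intervalIntegrable _ _),
    int_cos_z, int_cos_z]
  rcases eq_or_ne m n with rfl | hmn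
  · rcases eq_or_ne m 0 with rfl | hm
    · norm_num
    · have h1 : (m:ℤ) + m ≠ 0 := by omega
      simp [h1, hm]
  · have h1 : (m:ℤ) - n ≠ 0 := by omega
    have h2 : (m:ℤ) + n ≠ 0 ∨ True := by omega
    rcases eq_or_ne ((m:ℤ) + n) 0 with h2 | h2
    · exact absurd h2 (by omega)
    · simp [h1, h2, hmn]

lemma int_sin_sin (m n : ℕ) : ∫ φ in (0:ℝ)..(2*π), Real.sin (m * φ) * Real.sin (n * φ)
    = if m = n ∧ m ≠ 0 then π else 0 := by
  have h : ∀ φ : ℝ, Real.sin (m * φ) * Real.sin (n * φ)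
      = (Real.cos (((m - n : ℤ) : ℝ) * φ) - Real.cos (((m + n : ℤ) : ℝ) * φ)) / 2 := by
    intro φ
    push_cast
    rw [show ((m:ℝ)+n)*φ = m*φ + n*φ by ring, show ((m:ℝ)-n)*φ = m*φ - n*φ by ring,
      Real.cos_add, Real.cos_sub]
    ring
  rw [intervalIntegral.integral_congr (g := fun φ =>
      (Real.cos (((m - n : ℤ) : ℝ) * φ) - Real.cos (((m + n : ℤ) : ℝ) * φ)) / 2)
      (fun φ _ => h φ)]
  rw [intervalIntegral.integral_div, intervalIntegral.integral_sub
    ((cont_cosm _).intervalIntegrable _ _) ((cont_cosm _).intervalIntegrable _ _),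
    int_cos_z, int_cos_z]
  rcases eq_or_ne m n with rfl | hmn
  · rcases eq_or_ne m 0 with rfl | hm
    · norm_num
    · have h1 : (m:ℤ) + m ≠ 0 := by omega
      simp [h1, hm]
  · have h1 : (m:ℤ) - n ≠ 0 := by omega
    have h2 : (m:ℤ) + n ≠ 0 ∨ True := by omega
    rcases eq_or_ne ((m:ℤ) + n) 0 with h2 | h2
    · exact absurd h2 (by omega)
    · simp [h1, h2, hmn]

lemma int_sin_cos (m n : ℕ) : ∫ φ in (0:ℝ)..(2*π), Real.sin (m * φ) * Real.cos (n * φ) = 0 := by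
  have h : ∀ φ : ℝ, Real.sin (m * φ) * Real.cos (n * φ)
      = (Real.sin (((m + n : ℤ) : ℝ) * φ) + Real.sin (((m - n : ℤ) : ℝ) * φ)) / 2 := by
    intro φ
    push_cast
    rw [show ((m:ℝ)+n)*φ = m*φ + n*φ by ring, show ((m:ℝ)-n)*φ = m*φ - n*φ by ring,
      Real.sin_add, Real.sin_sub]
    ring
  rw [intervalIntegral.integral_congr (g := fun φ =>
      (Real.sin (((m + n : ℤ) : ℝ) * φ) + Real.sin (((m - n : ℤ) : ℝ) * φ)) / 2)
      (fun φ _ => h φ)]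
  rw [intervalIntegral.integral_div, intervalIntegral.integral_add
    ((cont_sinm _).intervalIntegrable _ _) ((cont_sinm _).intervalIntegrable _ _),
    int_sin_z, int_sin_z]
  norm_num

lemma Y_zero (ℓ : ℕ) (φ : ℝ) : Y 0 ℓ φ = 1 / Real.sqrt (2*π) := by
  match ℓ with
  | 0 => rfl
  | 1 => rfl
  | (n+2) => rfl
lemma Y_succ_one (k : ℕ) (φ : ℝ) : Y (k+1) 1 φ = Real.cos ((k+1 : ℕ) * φ) / Real.sqrt π := rfl
lemma Y_succ_two (k : ℕ) (φ : ℝ) : Y (k+1) 2 φ = Real.sin ((k+1 : ℕ) * φ) / Real.sqrt π := rfl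

lemma sqrt_pi_sq : Real.sqrt π * Real.sqrt π = π := Real.mul_self_sqrt Real.pi_pos.le
lemma sqrt_two_pi_sq : Real.sqrt (2*π) * Real.sqrt (2*π) = 2*π :=
  Real.mul_self_sqrt (by positivity)
lemma sqrt_pi_ne : Real.sqrt π ≠ 0 := by positivity
lemma sqrt_two_pi_ne : Real.sqrt (2*π) ≠ 0 := by
  have : (0:ℝ) < 2*π := by positivity
  positivity

lemma Y_cont (k ℓ : ℕ) : Continuous (Y k ℓ) := by
  match k, ℓ with
  | 0, l =>
    have : Y 0 l = fun _ => 1 / Real.sqrt (2*π) := funext (Y_zero l)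
    rw [this]
    exact continuous_const
  | (k+1), 1 => exact (cont_cosm _).div_const _
  | (k+1), 0 => exact (cont_sinm _).div_const _
  | (k+1), (n+2) => exact (cont_sinm _).div_const _

lemma int_cos_n (n : ℕ) : ∫ φ in (0:ℝ)..(2*π), Real.cos (n * φ) = if n = 0 then 2*π else 0 := by
  have := int_cos_z n
  simp only [Int.cast_natCast] at this
  rw [this]
  simp

lemma int_const_mul' (c : ℝ) (f g : ℝ → ℝ) (h : ∀ φ, f φ = c * g φ) :
    ∫ φ in (0:ℝ)..(2*π), f φ = c * ∫ φ in (0:ℝ)..(2*π), g φ := by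
  simp only [h]
  exact intervalIntegral.integral_const_mul c g

lemma ortho (k ℓ k' ℓ' : ℕ) (h1 : 1 ≤ ℓ) (h2 : ℓ ≤ aa k) (h1' : 1 ≤ ℓ') (h2' : ℓ' ≤ aa k') :
    ∫ φ in (0:ℝ)..(2*π), Y k ℓ φ * Y k' ℓ' φ = if k = k' ∧ ℓ = ℓ' then 1 else 0 := by
  rcases k with _ | k
  · simp only [aa, if_pos rfl] at h2
    have hℓ : ℓ = 1 := le_antisymm h2 h1
    subst hℓ
    rcases k' with _ | k'
    · simp only [aa, if_pos rfl] at h2'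
      have hℓ' : ℓ' = 1 := le_antisymm h2' h1'
      subst hℓ'
      simp only [Y_zero]
      rw [intervalIntegral.integral_const, if_pos (by simp), smul_eq_mul, sub_zero,
        div_mul_div_comm, one_mul, sqrt_two_pi_sq]
      field_simp
    · simp only [aa, if_neg (Nat.succ_ne_zero k')] at h2'
      interval_cases ℓ'
      · rw [int_const_mul' (1/(Real.sqrt (2*π) * Real.sqrt π)) _
          (fun φ => Real.cos ((k'+1 : ℕ) * φ))
          (fun φ => by rw [Y_zero, Y_succ_one]; ring), int_cos_n]
        simp
      · rw [int_const_mul' (1/(Real.sqrt (2*π) * Real.sqrt π)) _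
          (fun φ => Real.sin ((k'+1 : ℕ) * φ))
          (fun φ => by rw [Y_zero, Y_succ_two]; ring)]
        have := int_sin_z (k'+1)
        push_cast at this
        push_cast
        rw [this]
        simp
  · simp only [aa, if_neg (Nat.succ_ne_zero k)] at h2
    rcases k' with _ | k'
    · simp only [aa, if_pos rfl] at h2'
      have hℓ' : ℓ' = 1 := le_antisymm h2' h1'
      subst hℓ'
      interval_cases ℓ
      · rw [int_const_mul' (1/(Real.sqrt (2*π) * Real.sqrt π)) _
          (fun φ => Real.cos ((k+1 : ℕ) * φ))
          (fun φ => by rw [Y_zero, Y_succ_one]; ring), int_cos_n]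
        simp
      · rw [int_const_mul' (1/(Real.sqrt (2*π) * Real.sqrt π)) _
          (fun φ => Real.sin ((k+1 : ℕ) * φ))
          (fun φ => by rw [Y_zero, Y_succ_two]; ring)]
        have := int_sin_z (k+1)
        push_cast at this
        push_cast
        rw [this]
        simp
    · simp only [aa, if_neg (Nat.succ_ne_zero k')] at h2'
      interval_cases ℓ <;> interval_cases ℓ'
      · rw [int_const_mul' (1/(Real.sqrt π * Real.sqrt π)) _
          (fun φ => Real.cos ((k+1 : ℕ) * φ) * Real.cos ((k'+1 : ℕ) * φ))
          (fun φ => by rw [Y_succ_one, Y_succ_one]; ring), int_cos_cos]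
        rcases eq_or_ne k k' with rfl | hkk
        · rw [if_pos rfl, if_neg (Nat.succ_ne_zero k), if_pos (by simp), sqrt_pi_sq]
          field_simp
        · rw [if_neg (by omega), if_neg (by simp [hkk])]
          ring
      · rw [int_const_mul' (1/(Real.sqrt π * Real.sqrt π)) _
          (fun φ => Real.sin ((k'+1 : ℕ) * φ) * Real.cos ((k+1 : ℕ) * φ))
          (fun φ => by rw [Y_succ_one, Y_succ_two]; ring), int_sin_cos]
        rw [if_neg (by omega)]
        ring
      · rw [int_const_mul' (1/(Real.sqrt π * Real.sqrt π)) _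
          (fun φ => Real.sin ((k+1 : ℕ) * φ) * Real.cos ((k'+1 : ℕ) * φ))
          (fun φ => by rw [Y_succ_one, Y_succ_two]; ring), int_sin_cos]
        rw [if_neg (by omega)]
        ring
      · rw [int_const_mul' (1/(Real.sqrt π * Real.sqrt π)) _
          (fun φ => Real.sin ((k+1 : ℕ) * φ) * Real.sin ((k'+1 : ℕ) * φ))
          (fun φ => by rw [Y_succ_two, Y_succ_two]; ring), int_sin_sin]
        rcases eq_or_ne k k' with rfl | hkk
        · rw [if_pos (by simp), if_pos (by simp), sqrt_pi_sq]
          field_simp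
        · rw [if_neg (by omega), if_neg (by simp [hkk])]
          ring

def G (N : ℕ) : Set (ℝ → ℝ → ℝ) :=
  {f | ∃ j k : ℕ, k ≤ N ∧ ((f = fun r φ => r^(2*j) * r^k * Real.cos (k*φ)) ∨
    (f = fun r φ => r^(2*j) * r^k * Real.sin (k*φ)))}

noncomputable def V (N : ℕ) : Submodule ℝ (ℝ → ℝ → ℝ) := Submodule.span ℝ (G N)

lemma V_mono {N N' : ℕ} (h : N ≤ N') : V N ≤ V N' :=
  Submodule.span_mono (by rintro f ⟨j, k, hk, hf⟩; exact ⟨j, k, hk.trans h, hf⟩)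

lemma mul_cos_mem {N : ℕ} {f : ℝ → ℝ → ℝ} (hf : f ∈ V N) :
    (fun r φ => (r * Real.cos φ) * f r φ) ∈ V (N+1) := by
  induction hf using Submodule.span_induction with
  | mem x hx =>
    obtain ⟨j, k, hk, hx | hx⟩ := hx <;> subst hx
    · rcases k with _ | k
      · apply Submodule.subset_span
        refine ⟨j, 1, by omega, Or.inl ?_⟩
        funext r φ
        push_cast
        simp
        ring
      · have heq : (fun r φ => (r * Real.cos φ) * ((fun r φ => r^(2*j) * r^(k+1) * Real.cos ((k+1:ℕ)*φ)) r φ))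
            = (1/2 : ℝ) • (fun r φ => r^(2*j) * r^(k+2) * Real.cos ((k+2:ℕ)*φ))
              + (1/2 : ℝ) • (fun r φ => r^(2*(j+1)) * r^k * Real.cos ((k:ℕ)*φ)) := by
          funext r φ
          simp only [Pi.add_apply, Pi.smul_apply, smul_eq_mul]
          have e1 : ((k+2:ℕ):ℝ) * φ = ((k+1:ℕ):ℝ)*φ + φ := by push_cast; ring
          have e2 : ((k:ℕ):ℝ) * φ = ((k+1:ℕ):ℝ)*φ - φ := by push_cast; ring
          rw [e1, e2, Real.cos_add, Real.cos_sub]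
          ring
        rw [heq]
        exact Submodule.add_mem _
          (Submodule.smul_mem _ _ (Submodule.subset_span ⟨j, k+2, by omega, Or.inl rfl⟩))
          (Submodule.smul_mem _ _ (Submodule.subset_span ⟨j+1, k, by omega, Or.inl rfl⟩))
    · rcases k with _ | k
      · have heq : (fun r φ => (r * Real.cos φ) * ((fun r φ => r^(2*j) * r^0 * Real.sin ((0:ℕ)*φ)) r φ))
            = (0 : ℝ → ℝ → ℝ) := by
          funext r φ
          simp
        rw [heq]
        exact Submodule.zero_mem _
      · have heq : (fun r φ => (r * Real.cos φ) * ((fun r φ => r^(2*j) * r^(k+1) * Real.sin ((k+1:ℕ)*φ)) r φ))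
            = (1/2 : ℝ) • (fun r φ => r^(2*j) * r^(k+2) * Real.sin ((k+2:ℕ)*φ))
              + (1/2 : ℝ) • (fun r φ => r^(2*(j+1)) * r^k * Real.sin ((k:ℕ)*φ)) := by
          funext r φ
          simp only [Pi.add_apply, Pi.smul_apply, smul_eq_mul]
          have e1 : ((k+2:ℕ):ℝ) * φ = ((k+1:ℕ):ℝ)*φ + φ := by push_cast; ring
          have e2 : ((k:ℕ):ℝ) * φ = ((k+1:ℕ):ℝ)*φ - φ := by push_cast; ring
          rw [e1, e2, Real.sin_add, Real.sin_sub]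
          ring
        rw [heq]
        exact Submodule.add_mem _
          (Submodule.smul_mem _ _ (Submodule.subset_span ⟨j, k+2, by omega, Or.inr rfl⟩))
          (Submodule.smul_mem _ _ (Submodule.subset_span ⟨j+1, k, by omega, Or.inr rfl⟩))
  | zero =>
    have : (fun r φ => (r * Real.cos φ) * ((0 : ℝ → ℝ → ℝ) r φ)) = (0 : ℝ → ℝ → ℝ) := by
      funext r φ; simp
    rw [this]; exact Submodule.zero_mem _
  | add x y _ _ hx hy =>
    have : (fun r φ => (r * Real.cos φ) * ((x + y) r φ))
        = (fun r φ => (r * Real.cos φ) * (x r φ)) + (fun r φ => (r * Real.cos φ) * (y r φ)) := by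
      funext r φ; simp [Pi.add_apply]; ring
    rw [this]; exact Submodule.add_mem _ hx hy
  | smul c x _ hx =>
    have : (fun r φ => (r * Real.cos φ) * ((c • x) r φ))
        = c • (fun r φ => (r * Real.cos φ) * (x r φ)) := by
      funext r φ; simp [Pi.smul_apply, smul_eq_mul]; ring
    rw [this]; exact Submodule.smul_mem _ _ hx

lemma mul_sin_mem {N : ℕ} {f : ℝ → ℝ → ℝ} (hf : f ∈ V N) :
    (fun r φ => (r * Real.sin φ) * f r φ) ∈ V (N+1) := by
  induction hf using Submodule.span_induction with
  | mem x hx =>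
    obtain ⟨j, k, hk, hx | hx⟩ := hx <;> subst hx
    · rcases k with _ | k
      · apply Submodule.subset_span
        refine ⟨j, 1, by omega, Or.inr ?_⟩
        funext r φ
        push_cast
        simp
        ring
      · have heq : (fun r φ => (r * Real.sin φ) * ((fun r φ => r^(2*j) * r^(k+1) * Real.cos ((k+1:ℕ)*φ)) r φ))
            = (1/2 : ℝ) • (fun r φ => r^(2*j) * r^(k+2) * Real.sin ((k+2:ℕ)*φ))
              + (-(1/2) : ℝ) • (fun r φ => r^(2*(j+1)) * r^k * Real.sin ((k:ℕ)*φ)) := by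
          funext r φ
          simp only [Pi.add_apply, Pi.smul_apply, smul_eq_mul]
          have e1 : ((k+2:ℕ):ℝ) * φ = ((k+1:ℕ):ℝ)*φ + φ := by push_cast; ring
          have e2 : ((k:ℕ):ℝ) * φ = ((k+1:ℕ):ℝ)*φ - φ := by push_cast; ring
          rw [e1, e2, Real.sin_add, Real.sin_sub]
          ring
        rw [heq]
        exact Submodule.add_mem _
          (Submodule.smul_mem _ _ (Submodule.subset_span ⟨j, k+2, by omega, Or.inr rfl⟩))
          (Submodule.smul_mem _ _ (Submodule.subset_span ⟨j+1, k, by omega, Or.inr rfl⟩))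
    · rcases k with _ | k
      · have heq : (fun r φ => (r * Real.sin φ) * ((fun r φ => r^(2*j) * r^0 * Real.sin ((0:ℕ)*φ)) r φ))
            = (0 : ℝ → ℝ → ℝ) := by
          funext r φ
          simp
        rw [heq]
        exact Submodule.zero_mem _
      · have heq : (fun r φ => (r * Real.sin φ) * ((fun r φ => r^(2*j) * r^(k+1) * Real.sin ((k+1:ℕ)*φ)) r φ))
            = (1/2 : ℝ) • (fun r φ => r^(2*(j+1)) * r^k * Real.cos ((k:ℕ)*φ))
              + (-(1/2) : ℝ) • (fun r φ => r^(2*j) * r^(k+2) * Real.cos ((k+2:ℕ)*φ)) := by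
          funext r φ
          simp only [Pi.add_apply, Pi.smul_apply, smul_eq_mul]
          have e1 : ((k+2:ℕ):ℝ) * φ = ((k+1:ℕ):ℝ)*φ + φ := by push_cast; ring
          have e2 : ((k:ℕ):ℝ) * φ = ((k+1:ℕ):ℝ)*φ - φ := by push_cast; ring
          rw [e1, e2, Real.cos_add, Real.cos_sub]
          ring
        rw [heq]
        exact Submodule.add_mem _
          (Submodule.smul_mem _ _ (Submodule.subset_span ⟨j+1, k, by omega, Or.inl rfl⟩))
          (Submodule.smul_mem _ _ (Submodule.subset_span ⟨j, k+2, by omega, Or.inl rfl⟩))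
  | zero =>
    have : (fun r φ => (r * Real.sin φ) * ((0 : ℝ → ℝ → ℝ) r φ)) = (0 : ℝ → ℝ → ℝ) := by
      funext r φ; simp
    rw [this]; exact Submodule.zero_mem _
  | add x y _ _ hx hy =>
    have : (fun r φ => (r * Real.sin φ) * ((x + y) r φ))
        = (fun r φ => (r * Real.sin φ) * (x r φ)) + (fun r φ => (r * Real.sin φ) * (y r φ)) := by
      funext r φ; simp [Pi.add_apply]; ring
    rw [this]; exact Submodule.add_mem _ hx hy
  | smul c x _ hx =>
    have : (fun r φ => (r * Real.sin φ) * ((c • x) r φ))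
        = c • (fun r φ => (r * Real.sin φ) * (x r φ)) := by
      funext r φ; simp [Pi.smul_apply, smul_eq_mul]; ring
    rw [this]; exact Submodule.smul_mem _ _ hx

lemma powgen_mem (m n : ℕ) :
    (fun r φ => (r * Real.cos φ)^m * (r * Real.sin φ)^n) ∈ V (m + n) := by
  induction m with
  | zero =>
    induction n with
    | zero =>
      apply Submodule.subset_span
      refine ⟨0, 0, le_refl _, Or.inl ?_⟩
      funext r φ
      simp
    | succ n ih =>
      have : (fun r φ => (r * Real.cos φ)^0 * (r * Real.sin φ)^(n+1))
          = (fun r φ => (r * Real.sin φ) * ((fun r φ => (r * Real.cos φ)^0 * (r * Real.sin φ)^n) r φ)) := by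
        funext r φ; ring
      rw [this]
      exact mul_sin_mem ih
  | succ m ih =>
    have : (fun r φ => (r * Real.cos φ)^(m+1) * (r * Real.sin φ)^n)
        = (fun r φ => (r * Real.cos φ) * ((fun r φ => (r * Real.cos φ)^m * (r * Real.sin φ)^n) r φ)) := by
      funext r φ; ring
    rw [this]
    have := mul_cos_mem ih
    have he : m + n + 1 = m + 1 + n := by omega
    rwa [he] at this

lemma eval_mem (p : MvPolynomial (Fin 2) ℝ) :
    (fun r φ => MvPolynomial.eval
      (fun i : Fin 2 => if i = 0 then r * Real.cos φ else r * Real.sin φ) p) ∈ V p.totalDegree := by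
  have hfun : (fun r φ => MvPolynomial.eval
      (fun i : Fin 2 => if i = 0 then r * Real.cos φ else r * Real.sin φ) p)
      = ∑ d ∈ p.support, MvPolynomial.coeff d p •
          (fun r φ => (r * Real.cos φ)^(d 0) * (r * Real.sin φ)^(d 1)) := by
    funext r φ
    rw [MvPolynomial.eval_eq', Finset.sum_apply, Finset.sum_apply]
    refine Finset.sum_congr rfl (fun d _ => ?_)
    simp only [Pi.smul_apply, smul_eq_mul, Fin.prod_univ_two]
    norm_num
  rw [hfun]
  refine Submodule.sum_mem _ (fun d hd => Submodule.smul_mem _ _ ?_)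
  refine V_mono ?_ (powgen_mem (d 0) (d 1))
  have h1 := MvPolynomial.le_totalDegree hd
  have h2 : d.sum (fun _ e => e) = d 0 + d 1 := by
    rw [Finsupp.sum_fintype _ _ (fun i => rfl), Fin.sum_univ_two]
  omega

lemma rep_of_mem {N : ℕ} {f : ℝ → ℝ → ℝ} (hf : f ∈ V N) :
    ∃ A B : ℕ → Polynomial ℝ, ∀ r φ : ℝ, f r φ =
      ∑ k ∈ Finset.range (N+1),
        ((A k).eval (r^2) * r^k * Real.cos (k*φ) + (B k).eval (r^2) * r^k * Real.sin (k*φ)) := by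
  induction hf using Submodule.span_induction with
  | mem x hx =>
    obtain ⟨j, k, hk, hx | hx⟩ := hx <;> subst hx
    · refine ⟨fun i => if i = k then Polynomial.X^j else 0, 0, fun r φ => ?_⟩
      have hterm : ∀ i, ((if i = k then (Polynomial.X:Polynomial ℝ)^j else 0).eval (r^2) * r^i * Real.cos (i*φ)
          + ((0 : ℕ → Polynomial ℝ) i).eval (r^2) * r^i * Real.sin (i*φ))
          = if i = k then r^(2*j) * r^k * Real.cos (k*φ) else 0 := by
        intro i
        by_cases h : i = k
        · subst h
          simp [pow_mul]
        · simp [h]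
      simp only [hterm]
      rw [Finset.sum_ite_eq' (Finset.range (N+1)) k, if_pos (Finset.mem_range.mpr (by omega))]
    · refine ⟨0, fun i => if i = k then Polynomial.X^j else 0, fun r φ => ?_⟩
      have hterm : ∀ i, (((0 : ℕ → Polynomial ℝ) i).eval (r^2) * r^i * Real.cos (i*φ)
          + (if i = k then (Polynomial.X:Polynomial ℝ)^j else 0).eval (r^2) * r^i * Real.sin (i*φ))
          = if i = k then r^(2*j) * r^k * Real.sin (k*φ) else 0 := by
        intro i
        by_cases h : i = k
        · subst h
          simp [pow_mul]
        · simp [h]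
      simp only [hterm]
      rw [Finset.sum_ite_eq' (Finset.range (N+1)) k, if_pos (Finset.mem_range.mpr (by omega))]
  | zero => exact ⟨0, 0, fun r φ => by simp⟩
  | add x y _ _ hx hy =>
    obtain ⟨A, B, hA⟩ := hx
    obtain ⟨A', B', hA'⟩ := hy
    refine ⟨fun k => A k + A' k, fun k => B k + B' k, fun r φ => ?_⟩
    rw [Pi.add_apply, Pi.add_apply, hA, hA', ← Finset.sum_add_distrib]
    refine Finset.sum_congr rfl (fun k _ => ?_)
    simp only [Polynomial.eval_add]
    ring
  | smul c x _ hx =>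
    obtain ⟨A, B, hA⟩ := hx
    refine ⟨fun k => Polynomial.C c * A k, fun k => Polynomial.C c * B k, fun r φ => ?_⟩
    simp only [Pi.smul_apply, smul_eq_mul]
    rw [hA, Finset.mul_sum]
    refine Finset.sum_congr rfl (fun k _ => ?_)
    simp only [Polynomial.eval_mul, Polynomial.eval_C]
    ring

lemma repY_of_mem {N : ℕ} {f : ℝ → ℝ → ℝ} (hf : f ∈ V N) :
    ∃ q : ℕ → ℕ → Polynomial ℝ, ∀ r φ : ℝ, f r φ =
      ∑ k ∈ Finset.range (N+1), ∑ ℓ ∈ Finset.Icc 1 (aa k),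
        (q k ℓ).eval (r^2) * r^k * Y k ℓ φ := by
  obtain ⟨A, B, h⟩ := rep_of_mem hf
  refine ⟨fun k ℓ => if k = 0 then (if ℓ = 1 then Polynomial.C (Real.sqrt (2*π)) * A 0 else 0)
    else if ℓ = 1 then Polynomial.C (Real.sqrt π) * A k
    else if ℓ = 2 then Polynomial.C (Real.sqrt π) * B k else 0, fun r φ => ?_⟩
  rw [h r φ]
  refine Finset.sum_congr rfl (fun k _ => ?_)
  rcases k with _ | k
  · rw [show Finset.Icc 1 (aa 0) = {1} from rfl, Finset.sum_singleton]
    simp only [if_pos rfl, Polynomial.eval_mul, Polynomial.eval_C, Y_zero]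
    push_cast
    simp only [Nat.cast_zero, zero_mul, Real.cos_zero, Real.sin_zero, pow_zero]
    field_simp
    rw [Polynomial.eval_mul, Polynomial.eval_C]; ring
  · rw [show Finset.Icc 1 (aa (k+1)) = {1, 2} from rfl]
    rw [Finset.sum_insert (by decide), Finset.sum_singleton]
    norm_num [Y_succ_one, Y_succ_two]
    field_simp

/-- Almansi/Gauss decomposition of a bivariate polynomial: there exist univariate
polynomials `p̃_{(k,ℓ)}` and `N ≤ deg p` with
`p(r cos φ, r sin φ) = ∑_{k=0}^N ∑_{ℓ=1}^{a_k} p̃_{(k,ℓ)}(r²) r^k Y_{(k,ℓ)}(φ)`;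
consequently every Fourier coefficient of `p` has the form `p̃_{(k,ℓ)}(r²) r^k`. -/
theorem almansi_decomposition (p : MvPolynomial (Fin 2) ℝ) :
    ∃ (N : ℕ) (q : ℕ → ℕ → Polynomial ℝ), N ≤ p.totalDegree ∧
      (∀ r φ : ℝ,
        MvPolynomial.eval (fun i : Fin 2 => if i = 0 then r * Real.cos φ else r * Real.sin φ) p
          = ∑ k ∈ Finset.range (N + 1), ∑ ℓ ∈ Finset.Icc 1 (aa k),
              (q k ℓ).eval (r ^ 2) * r ^ k * Y k ℓ φ) ∧
      (∀ k ℓ : ℕ, 1 ≤ ℓ → ℓ ≤ aa k → ∀ r : ℝ,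
        (∫ φ in (0:ℝ)..(2 * π),
            (MvPolynomial.eval
              (fun i : Fin 2 => if i = 0 then r * Real.cos φ else r * Real.sin φ) p)
              * Y k ℓ φ)
          = (q k ℓ).eval (r ^ 2) * r ^ k) := by
  obtain ⟨q₀, h⟩ := repY_of_mem (eval_mem p)
  set N := p.totalDegree with hN
  refine ⟨N, fun k ℓ => if k ≤ N then q₀ k ℓ else 0, le_refl _, ?_, ?_⟩
  · intro r φ
    beta_reduce
    rw [h r φ]
    refine Finset.sum_congr rfl (fun k hk => Finset.sum_congr rfl (fun ℓ _ => ?_))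
    rw [if_pos (Nat.lt_succ_iff.mp (Finset.mem_range.mp hk))]
  · intro k' ℓ' h1' h2' r
    beta_reduce
    have hint : ∀ φ : ℝ, (MvPolynomial.eval
        (fun i : Fin 2 => if i = 0 then r * Real.cos φ else r * Real.sin φ) p) * Y k' ℓ' φ
        = ∑ k ∈ Finset.range (N+1), ∑ ℓ ∈ Finset.Icc 1 (aa k),
            (q₀ k ℓ).eval (r^2) * r^k * (Y k ℓ φ * Y k' ℓ' φ) := by
      intro φ
      rw [h r φ, Finset.sum_mul]
      refine Finset.sum_congr rfl (fun k _ => ?_)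
      rw [Finset.sum_mul]
      exact Finset.sum_congr rfl (fun ℓ _ => by ring)
    have step1 : (∫ φ in (0:ℝ)..(2 * π),
        (MvPolynomial.eval
          (fun i : Fin 2 => if i = 0 then r * Real.cos φ else r * Real.sin φ) p) * Y k' ℓ' φ)
        = ∑ k ∈ Finset.range (N+1), ∑ ℓ ∈ Finset.Icc 1 (aa k),
            (q₀ k ℓ).eval (r^2) * r^k * ∫ φ in (0:ℝ)..(2*π), Y k ℓ φ * Y k' ℓ' φ := by
      rw [intervalIntegral.integral_congr (g := fun φ =>
        ∑ k ∈ Finset.range (N+1), ∑ ℓ ∈ Finset.Icc 1 (aa k),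
            (q₀ k ℓ).eval (r^2) * r^k * (Y k ℓ φ * Y k' ℓ' φ)) (fun φ _ => hint φ)]
      rw [intervalIntegral.integral_finset_sum (f := fun k x => ∑ ℓ ∈ Finset.Icc 1 (aa k),
          (q₀ k ℓ).eval (r^2) * r^k * (Y k ℓ x * Y k' ℓ' x)) (fun k _ =>
        (Continuous.intervalIntegrable (continuous_finset_sum _ (fun ℓ _ =>
          continuous_const.mul ((Y_cont k ℓ).mul (Y_cont k' ℓ')))) _ _))]
      refine Finset.sum_congr rfl (fun k _ => ?_)
      rw [intervalIntegral.integral_finset_sum (f := fun ℓ x =>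
          (q₀ k ℓ).eval (r^2) * r^k * (Y k ℓ x * Y k' ℓ' x)) (fun ℓ _ =>
        (Continuous.intervalIntegrable
          (continuous_const.mul ((Y_cont k ℓ).mul (Y_cont k' ℓ'))) _ _))]
      exact Finset.sum_congr rfl (fun ℓ _ => intervalIntegral.integral_const_mul _ _)
    rw [step1]
    have step2 : ∀ k ∈ Finset.range (N+1), ∀ ℓ ∈ Finset.Icc 1 (aa k),
        (q₀ k ℓ).eval (r^2) * r^k * ∫ φ in (0:ℝ)..(2*π), Y k ℓ φ * Y k' ℓ' φ
        = (q₀ k ℓ).eval (r^2) * r^k * (if k = k' ∧ ℓ = ℓ' then 1 else 0) := by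
      intro k _ ℓ hℓ
      obtain ⟨ha, hb⟩ := Finset.mem_Icc.mp hℓ
      rw [ortho k ℓ k' ℓ' ha hb h1' h2']
    rw [Finset.sum_congr rfl (fun k hk => Finset.sum_congr rfl (fun ℓ hℓ => step2 k hk ℓ hℓ))]
    rcases le_or_gt k' N with hk' | hk'
    · rw [Finset.sum_eq_single_of_mem k' (Finset.mem_range.mpr (by omega))]
      · rw [Finset.sum_eq_single_of_mem ℓ' (Finset.mem_Icc.mpr ⟨h1', h2'⟩)]
        · rw [if_pos (show k' = k' ∧ ℓ' = ℓ' from ⟨rfl, rfl⟩), mul_one, if_pos hk']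
        · intro ℓ _ hne
          rw [if_neg (by simp [hne]), mul_zero]
      · intro k _ hne
        exact Finset.sum_eq_zero (fun ℓ _ => by rw [if_neg (by simp [hne]), mul_zero])
    · rw [if_neg (by omega)]
      simp only [Polynomial.eval_zero, zero_mul]
      refine Finset.sum_eq_zero (fun k hk => Finset.sum_eq_zero (fun ℓ _ => ?_))
      have hne : k ≠ k' := by
        have := Finset.mem_range.mp hk
        omega
      rw [if_neg (by simp [hne]), mul_zero]
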